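/- Let σ be a 0-1 squashing function and suppose additionally σ is strictly increasing. Let K ⊆ ℝⁿ be compact. Then for every continuous function T : K → σ(ℝ) (taking values in the image of σ) and every ε > 0, there exists F ∈ N₄^σ with sup_{x∈K} |F(x) - T(x)| < ε. -/

import Mathlib

open Filter Topology

/-- A 0-1 squashing function: increasing, continuous, with limit 0 at -∞ and 1 at +∞. -/
def IsSquashing (σ : ℝ → ℝ) : Prop :=
  Monotone σ ∧ Continuous σ ∧
    Tendsto σ atBot (nhds 0) ∧ Tendsto σ atTop (nhds 1)

/-- `Net σ n k f` means `f ∈ 𝒩_k`: `𝒩₁` is the affine functions on `ℝⁿ`, and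
`𝒩_{k+1}` consists of affine combinations `a₀ + Σⱼ aⱼ σ(Fⱼ)` with `Fⱼ ∈ 𝒩_k`
(so the summands `σ ∘ Fⱼ` range over `𝒩_k^σ`). -/
inductive Net (σ : ℝ → ℝ) (n : ℕ) : ℕ → ((Fin n → ℝ) → ℝ) → Prop
  | affine (a₀ : ℝ) (a : Fin n → ℝ) : Net σ n 1 (fun x => a₀ + ∑ i, a i * x i)
  | comb (k m : ℕ) (F : Fin m → ((Fin n → ℝ) → ℝ)) (a₀ : ℝ) (a : Fin m → ℝ)
      (hF : ∀ j, Net σ n k (F j)) :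
      Net σ n (k + 1) (fun x => a₀ + ∑ j, a j * σ (F j x))

section Aux

open Finset

variable {σ : ℝ → ℝ} {n : ℕ}

lemma net_continuous (hσ : Continuous σ) {k : ℕ} {F : (Fin n → ℝ) → ℝ} (h : Net σ n k F) :
    Continuous F := by
  induction h with
  | affine a₀ a =>
    exact continuous_const.add (continuous_finset_sum _ fun i _ =>
      continuous_const.mul (continuous_apply i))
  | comb k m F a₀ a hF ih =>
    exact continuous_const.add (continuous_finset_sum _ fun j _ =>
      continuous_const.mul (hσ.comp (ih j)))

lemma net_const (k : ℕ) (c : ℝ) : Net σ n (k + 1) (fun _ => c) := by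
  have h := Net.comb (σ := σ) (n := n) k 0 Fin.elim0 c Fin.elim0 (fun j => j.elim0)
  convert h using 2 with x
  simp

lemma net_affine_post {k : ℕ} {F : (Fin n → ℝ) → ℝ} (h : Net σ n k F) (β γ : ℝ) :
    Net σ n k (fun x => β * F x + γ) := by
  induction h with
  | affine a₀ a =>
    have h2 := Net.affine (σ := σ) (n := n) (β * a₀ + γ) (fun i => β * a i)
    convert h2 using 2 with x
    simp only [mul_add, Finset.mul_sum, mul_assoc]
    ring
  | comb k m F a₀ a hF ih =>
    have h2 := Net.comb (σ := σ) (n := n) k m F (β * a₀ + γ) (fun j => β * a j) hF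
    convert h2 using 2 with x
    simp only [mul_add, Finset.mul_sum, mul_assoc]
    ring

lemma net_add2 {F G : (Fin n → ℝ) → ℝ} (hF : Net σ n 2 F) (hG : Net σ n 2 G) :
    Net σ n 2 (fun x => F x + G x) := by
  cases hF with
  | comb k m P a₀ a hP =>
    cases hG with
    | comb k' m' Q b₀ b hQ =>
      have h2 := Net.comb (σ := σ) (n := n) 1 (m + m') (Fin.append P Q) (a₀ + b₀)
        (Fin.append a b) (fun j => by
          refine Fin.addCases (motive := fun j => Net σ n 1 (Fin.append P Q j)) ?_ ?_ j
          · intro i; rw [Fin.append_left]; exact hP i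
          · intro i; rw [Fin.append_right]; exact hQ i)
      convert h2 using 2 with x
      rw [Fin.sum_univ_add]
      simp only [Fin.append_left, Fin.append_right]
      ring

set_option maxHeartbeats 1600000 in
/-- The key one-dimensional approximation: every continuous function on a compact interval
is uniformly approximable by a single-hidden-layer combination of translates/dilates of `σ`. -/
lemma approx_1d (hσ : IsSquashing σ) (φ : ℝ → ℝ) (A B : ℝ)
    (hφ : ContinuousOn φ (Set.Icc A B)) (δ : ℝ) (hδ : 0 < δ) :
    ∃ (m : ℕ) (a₀ : ℝ) (a b c : Fin m → ℝ),
      ∀ t ∈ Set.Icc A B, |a₀ + (∑ j, a j * σ (b j * t + c j)) - φ t| < δ := by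
  obtain ⟨hmono, hcont, hbot, htop⟩ := hσ
  have hσ0 : ∀ s, 0 ≤ σ s := fun s => hmono.le_of_tendsto hbot s
  have hσ1 : ∀ s, σ s ≤ 1 := fun s => hmono.ge_of_tendsto htop s
  rcases le_or_gt B A with hBA | hAB
  · refine ⟨0, φ A, Fin.elim0, Fin.elim0, Fin.elim0, ?_⟩
    rintro t ⟨h1, h2⟩
    have : t = A := le_antisymm (h2.trans hBA) h1
    simp [this, hδ]
  -- uniform continuity modulus
  have hUC := isCompact_Icc.uniformContinuousOn_of_continuous hφ
  rw [Metric.uniformContinuousOn_iff] at hUC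
  obtain ⟨r, hr, hmod⟩ := hUC (δ/4) (by linarith)
  -- grid
  set N : ℕ := ⌈(B - A) / r⌉₊ + 1 with hNdef
  have hN0 : 0 < N := Nat.succ_pos _
  have hNR : (0:ℝ) < N := by exact_mod_cast hN0
  set Δ : ℝ := (B - A) / N with hΔdef
  have hΔ : 0 < Δ := div_pos (by linarith) hNR
  have hΔr : Δ < r := by
    rw [hΔdef, div_lt_iff₀ hNR]
    have h1 : (B - A) / r ≤ (⌈(B - A) / r⌉₊ : ℝ) := Nat.le_ceil _
    have h2 : ((⌈(B - A) / r⌉₊ : ℝ)) < N := by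
      rw [hNdef]; push_cast; linarith
    have : (B - A) / r < (N : ℝ) := lt_of_le_of_lt h1 h2
    calc B - A = ((B - A) / r) * r := by field_simp
    _ < N * r := mul_lt_mul_of_pos_right this hr
    _ = r * N := mul_comm _ _
  have hABN : A + N * Δ = B := by
    rw [hΔdef]; field_simp; ring
  set pt : ℕ → ℝ := fun i => A + i * Δ with hptdef
  set d : ℕ → ℝ := fun i => φ (pt (i + 1)) - φ (pt i) with hddef
  have hptA : pt 0 = A := by simp [hptdef]
  have hptmem : ∀ i ≤ N, pt i ∈ Set.Icc A B := by
    intro i hi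
    constructor
    · have : (0:ℝ) ≤ i * Δ := by positivity
      simp [hptdef]; linarith
    · have : (i:ℝ) * Δ ≤ N * Δ := by
        apply mul_le_mul_of_nonneg_right _ hΔ.le
        exact_mod_cast hi
      simp [hptdef]; linarith
  have hdsmall : ∀ i < N, |d i| ≤ δ / 4 := by
    intro i hi
    have h1 := hptmem i hi.le
    have h2 := hptmem (i + 1) hi
    have hdist : dist (pt (i + 1)) (pt i) < r := by
      rw [Real.dist_eq]
      have : pt (i + 1) - pt i = Δ := by simp [hptdef]; push_cast; ring
      rw [this, abs_of_pos hΔ]; exact hΔr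
    have := hmod _ h2 _ h1 hdist
    rw [Real.dist_eq] at this
    exact this.le
  -- sharpness parameters
  set η : ℝ := 1 / (2 * N + 2) with hηdef
  have hη0 : 0 < η := by positivity
  obtain ⟨P, hP⟩ : ∃ P, ∀ s ≥ P, 1 - η < σ s :=
    eventually_atTop.mp (htop.eventually (eventually_gt_nhds (by linarith)))
  obtain ⟨Q, hQ⟩ : ∃ Q, ∀ s ≤ Q, σ s < η :=
    eventually_atBot.mp (hbot.eventually (eventually_lt_nhds hη0))
  set R : ℝ := max 1 (max P (-Q)) with hRdef
  have hR0 : (0:ℝ) < R := lt_of_lt_of_le one_pos (le_max_left _ _)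
  set L : ℝ := 2 * R / Δ with hLdef
  have hL0 : 0 < L := by positivity
  have hup : ∀ s, R ≤ s → 1 - η < σ s := fun s hs =>
    hP s (le_trans (le_trans (le_max_left P (-Q)) (le_max_right 1 _)) hs)
  have hdown : ∀ s, s ≤ -R → σ s < η := by
    intro s hs
    have h1 : -Q ≤ R := le_trans (le_max_right P (-Q)) (le_max_right 1 _)
    exact hQ s (by linarith)
  have hLΔ : L * (Δ / 2) = R := by
    rw [hLdef]; field_simp
  set mid : ℕ → ℝ := fun i => pt i + Δ / 2 with hmiddef
  refine ⟨N, φ A, (fun j => d j), (fun _ => L), (fun j => -(L * mid j)), ?_⟩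
  rintro t ⟨htA, htB⟩
  set S : ℕ → ℝ := fun i => σ (L * t + -(L * mid i)) with hSdef
  have hsum : (∑ j : Fin N, d j * σ (L * t + -(L * mid j))) = ∑ i ∈ range N, d i * S i := by
    rw [← Fin.sum_univ_eq_sum_range]
  clear_value N Δ pt d η R L mid S
  -- the index of the cell containing t
  set j' : ℕ := min (N - 1) ⌊(t - A) / Δ⌋₊ with hj'def
  have hj'N : j' < N := lt_of_le_of_lt (min_le_left _ _) (Nat.sub_lt hN0 one_pos)
  have hlow : A + j' * Δ ≤ t := by
    have h1 : (j' : ℝ) ≤ (t - A) / Δ := by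
      have h0 : (j' : ℕ) ≤ ⌊(t - A) / Δ⌋₊ := min_le_right _ _
      calc (j' : ℝ) ≤ (⌊(t - A) / Δ⌋₊ : ℝ) := by exact_mod_cast h0
      _ ≤ (t - A) / Δ := Nat.floor_le (div_nonneg (by linarith) hΔ.le)
    have := (le_div_iff₀ hΔ).mp h1
    linarith
  have hhigh : t ≤ A + (j' + 1 : ℕ) * Δ := by
    rcases le_or_gt (⌊(t - A) / Δ⌋₊) (N - 1) with hc | hc
    · have hj'eq : j' = ⌊(t - A) / Δ⌋₊ := min_eq_right hc
      have h1 : (t - A) / Δ < (⌊(t - A) / Δ⌋₊ : ℝ) + 1 := Nat.lt_floor_add_one _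
      rw [← hj'eq] at h1
      have := (div_lt_iff₀ hΔ).mp h1
      push_cast
      linarith
    · have hj'eq : j' = N - 1 := min_eq_left hc.le
      have hNe : j' + 1 = N := by omega
      rw [hNe]
      linarith [hABN]
  clear_value j'
  -- split the sum
  have hsplit : ∑ i ∈ range N, d i * S i
      = (∑ i ∈ range j', d i * S i) + ∑ i ∈ Finset.Ico j' N, d i * S i :=
    (Finset.sum_range_add_sum_Ico _ hj'N.le).symm
  have hbot' : ∑ i ∈ Finset.Ico j' N, d i * S i
      = d j' * S j' + ∑ i ∈ Finset.Ico (j' + 1) N, d i * S i :=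
    Finset.sum_eq_sum_Ico_succ_bot hj'N _
  have htel : ∑ i ∈ range j', d i = φ (pt j') - φ A := by
    rw [hddef]
    rw [Finset.sum_range_sub (fun i => φ (pt i)) j', hptA]
  have key : φ A + (∑ i ∈ range N, d i * S i) - φ t
      = (∑ i ∈ range j', d i * (S i - 1)) + d j' * S j'
        + (∑ i ∈ Finset.Ico (j' + 1) N, d i * S i) + (φ (pt j') - φ t) := by
    rw [hsplit, hbot']
    have h2 : ∑ i ∈ range j', d i * (S i - 1)
        = (∑ i ∈ range j', d i * S i) - ∑ i ∈ range j', d i := by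
      rw [← Finset.sum_sub_distrib]
      exact Finset.sum_congr rfl fun i _ => by ring
    rw [h2, htel]
    ring
  -- pointwise bounds
  have hSb : ∀ i, 0 ≤ S i ∧ S i ≤ 1 := fun i => by rw [hSdef]; exact ⟨hσ0 _, hσ1 _⟩
  have hbound1 : ∀ i < j', |d i * (S i - 1)| ≤ δ / 4 * η := by
    intro i hi
    have hiN : i < N := lt_trans hi hj'N
    have hdi := hdsmall i hiN
    have harg : R ≤ L * t + -(L * mid i) := by
      have h1 : mid i + Δ / 2 ≤ t := by
        have h2 : (i:ℝ) + 1 ≤ (j' : ℝ) := by exact_mod_cast hi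
        have : A + ((i:ℝ) + 1) * Δ ≤ A + (j':ℝ) * Δ := by
          have := mul_le_mul_of_nonneg_right h2 hΔ.le
          linarith
        simp only [hmiddef, hptdef]
        linarith
      have : L * (Δ / 2) ≤ L * (t - mid i) := by
        apply mul_le_mul_of_nonneg_left _ hL0.le
        linarith
      rw [hLΔ] at this
      linarith [this]
    have hS1 : 1 - η < S i := by rw [hSdef]; exact hup _ harg
    have : |S i - 1| ≤ η := by
      rw [abs_le]
      constructor <;> [linarith [hS1]; linarith [(hSb i).2]]
    calc |d i * (S i - 1)| = |d i| * |S i - 1| := abs_mul _ _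
    _ ≤ δ / 4 * η := mul_le_mul hdi this (abs_nonneg _) (by linarith)
  have hbound3 : ∀ i ∈ Finset.Ico (j' + 1) N, |d i * S i| ≤ δ / 4 * η := by
    intro i hi
    rw [Finset.mem_Ico] at hi
    obtain ⟨hi1, hi2⟩ := hi
    have hdi := hdsmall i hi2
    have harg : L * t + -(L * mid i) ≤ -R := by
      have h2 : (j':ℝ) + 1 ≤ (i : ℝ) := by exact_mod_cast hi1
      have h1 : t ≤ mid i - Δ / 2 := by
        have : A + ((j':ℝ) + 1) * Δ ≤ A + (i:ℝ) * Δ := by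
          have := mul_le_mul_of_nonneg_right h2 hΔ.le
          linarith
        simp only [hmiddef, hptdef]
        push_cast at hhigh
        linarith
      have : L * (t - mid i) ≤ L * (-(Δ / 2)) := by
        apply mul_le_mul_of_nonneg_left _ hL0.le
        linarith
      have hLneg : L * (-(Δ / 2)) = -R := by rw [← hLΔ]; ring
      rw [hLneg] at this
      linarith
    have hSi : S i < η := by rw [hSdef]; exact hdown _ harg
    have : |S i| ≤ η := by rw [abs_le]; constructor <;> [linarith [(hSb i).1]; linarith]
    calc |d i * S i| = |d i| * |S i| := abs_mul _ _
    _ ≤ δ / 4 * η := mul_le_mul hdi this (abs_nonneg _) (by linarith)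
  have hE1 : |∑ i ∈ range j', d i * (S i - 1)| ≤ N * (δ / 4 * η) := by
    calc |∑ i ∈ range j', d i * (S i - 1)| ≤ ∑ i ∈ range j', |d i * (S i - 1)| :=
      Finset.abs_sum_le_sum_abs _ _
    _ ≤ ∑ _i ∈ range j', δ / 4 * η := Finset.sum_le_sum fun i hi =>
        hbound1 i (Finset.mem_range.mp hi)
    _ = j' * (δ / 4 * η) := by rw [Finset.sum_const, Finset.card_range, nsmul_eq_mul]
    _ ≤ N * (δ / 4 * η) := by
        apply mul_le_mul_of_nonneg_right _ (by positivity)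
        exact_mod_cast hj'N.le
  have hE3 : |∑ i ∈ Finset.Ico (j' + 1) N, d i * S i| ≤ N * (δ / 4 * η) := by
    calc |∑ i ∈ Finset.Ico (j' + 1) N, d i * S i|
        ≤ ∑ i ∈ Finset.Ico (j' + 1) N, |d i * S i| := Finset.abs_sum_le_sum_abs _ _
    _ ≤ ∑ _i ∈ Finset.Ico (j' + 1) N, δ / 4 * η := Finset.sum_le_sum hbound3
    _ = (Finset.Ico (j' + 1) N).card * (δ / 4 * η) := by rw [Finset.sum_const, nsmul_eq_mul]
    _ ≤ N * (δ / 4 * η) := by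
        apply mul_le_mul_of_nonneg_right _ (by positivity)
        have : (Finset.Ico (j' + 1) N).card ≤ N := by
          rw [Nat.card_Ico]; omega
        exact_mod_cast this
  have hE2 : |d j' * S j'| ≤ δ / 4 := by
    calc |d j' * S j'| = |d j'| * |S j'| := abs_mul _ _
    _ ≤ δ / 4 * 1 := mul_le_mul (hdsmall j' hj'N)
        (by rw [abs_le]; exact ⟨by linarith [(hSb j').1], (hSb j').2⟩) (abs_nonneg _) (by linarith)
    _ = δ / 4 := mul_one _
  have hE4 : |φ (pt j') - φ t| ≤ δ / 4 := by
    have h1 := hptmem j' hj'N.le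
    have hdist : dist (pt j') t < r := by
      have h5 : t - pt j' ≤ Δ := by
        push_cast at hhigh
        simp only [hptdef]
        linarith
      have h6 : pt j' ≤ t := by
        simp only [hptdef]; linarith
      rw [Real.dist_eq, abs_of_nonpos (by linarith)]
      linarith
    have := hmod _ h1 _ ⟨htA, htB⟩ hdist
    rw [Real.dist_eq] at this
    exact this.le
  -- total
  have hNη : (N:ℝ) * (δ / 4 * η) ≤ δ / 8 := by
    have h7 : (N:ℝ) * (δ / 4 * η) = ((N:ℝ) * δ) / (4 * (2 * N + 2)) := by
      rw [hηdef]; field_simp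
    rw [h7, div_le_div_iff₀ (by positivity) (by norm_num)]
    nlinarith [hNR.le, hδ.le]
  have habs : ∀ a b c e : ℝ, |a + b + c + e| ≤ |a| + |b| + |c| + |e| := by
    intro a b c e
    calc |a + b + c + e| ≤ |a + b + c| + |e| := abs_add_le _ _
    _ ≤ |a + b| + |c| + |e| := by linarith [abs_add_le (a + b) c]
    _ ≤ |a| + |b| + |c| + |e| := by linarith [abs_add_le a b]
  rw [hsum, key]
  have h6 := habs (∑ i ∈ range j', d i * (S i - 1)) (d j' * S j')
    (∑ i ∈ Finset.Ico (j' + 1) N, d i * S i) (φ (pt j') - φ t)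
  linarith [hE1, hE2, hE3, hE4, hNη, h6]

/-- Any 1D continuous function of an output of a level-k net is approximable at level k+1. -/
lemma net_comp_1d (hσ : IsSquashing σ) {K : Set (Fin n → ℝ)} (hK : IsCompact K)
    {k : ℕ} {F : (Fin n → ℝ) → ℝ} (h : Net σ n k F) (φ : ℝ → ℝ) (hφ : Continuous φ)
    (δ : ℝ) (hδ : 0 < δ) :
    ∃ G, Net σ n (k + 1) G ∧ ∀ x ∈ K, |G x - φ (F x)| < δ := by
  have hFc : Continuous F := net_continuous hσ.2.1 h
  obtain ⟨C, hC⟩ := hK.exists_bound_of_continuousOn hFc.continuousOn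
  obtain ⟨m, a₀, a, b, c, hap⟩ := approx_1d hσ φ (-C) C (hφ.continuousOn) δ hδ
  refine ⟨fun x => a₀ + ∑ j, a j * σ (b j * F x + c j), ?_, ?_⟩
  · exact Net.comb k m (fun j x => b j * F x + c j) a₀ a
      (fun j => net_affine_post h (b j) (c j))
  · intro x hx
    have hFx : F x ∈ Set.Icc (-C) C := by
      have := hC x hx
      rw [Real.norm_eq_abs, abs_le] at this
      exact this
    exact hap (F x) hFx

/-- Lift a net one level, approximately, on a compact set. -/
lemma net_lift (hσ : IsSquashing σ) {K : Set (Fin n → ℝ)} (hK : IsCompact K)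
    {k : ℕ} {F : (Fin n → ℝ) → ℝ} (h : Net σ n k F) (δ : ℝ) (hδ : 0 < δ) :
    ∃ G, Net σ n (k + 1) G ∧ ∀ x ∈ K, |G x - F x| < δ :=
  net_comp_1d hσ hK h id continuous_id δ hδ

/-- Ridge functions φ(b + w·x) are approximable by level-2 nets. -/
lemma ridge_approx (hσ : IsSquashing σ) {K : Set (Fin n → ℝ)} (hK : IsCompact K)
    (φ : ℝ → ℝ) (hφ : Continuous φ) (w : Fin n → ℝ) (b : ℝ) (δ : ℝ) (hδ : 0 < δ) :
    ∃ G, Net σ n 2 G ∧ ∀ x ∈ K, |G x - φ (b + ∑ i, w i * x i)| < δ :=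
  net_comp_1d hσ hK (Net.affine b w) φ hφ δ hδ

/-- A cosine ridge function as a continuous map on `K`. -/
noncomputable def cosMap {n : ℕ} (K : Set (Fin n → ℝ)) (w : Fin n → ℝ) (b : ℝ) : C(↥K, ℝ) :=
  ⟨fun x => Real.cos (b + ∑ i, w i * (x : Fin n → ℝ) i),
    Real.continuous_cos.comp (continuous_const.add (continuous_finset_sum _ fun i _ =>
      continuous_const.mul ((continuous_apply i).comp continuous_subtype_val)))⟩

@[simp] lemma cosMap_apply {n : ℕ} (K : Set (Fin n → ℝ)) (w : Fin n → ℝ) (b : ℝ) (x : ↥K) :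
    cosMap K w b x = Real.cos (b + ∑ i, w i * (x : Fin n → ℝ) i) := rfl

set_option maxHeartbeats 1000000 in
/-- Level-2 nets are dense in `C(K)` (Stone–Weierstrass via cosine ridge functions). -/
lemma net2_dense (hσ : IsSquashing σ) {K : Set (Fin n → ℝ)} (hK : IsCompact K)
    (h : (Fin n → ℝ) → ℝ) (hh : ContinuousOn h K) (δ : ℝ) (hδ : 0 < δ) :
    ∃ G, Net σ n 2 G ∧ ∀ x ∈ K, |G x - h x| < δ := by
  haveI : CompactSpace ↥K := isCompact_iff_compactSpace.mp hK
  set Gen : Set C(↥K, ℝ) := {f | ∃ w b, f = cosMap K w b} with hGen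
  set V : Submodule ℝ C(↥K, ℝ) := Submodule.span ℝ Gen with hV
  have hone : (1 : C(↥K, ℝ)) ∈ V := by
    have h1 : (1 : C(↥K, ℝ)) = cosMap K 0 0 := by
      ext x; simp
    rw [h1]; exact Submodule.subset_span ⟨0, 0, rfl⟩
  have hkey : ∀ (w₁ w₂ : Fin n → ℝ) (b₁ b₂ : ℝ),
      cosMap K w₁ b₁ * cosMap K w₂ b₂
        = (1/2 : ℝ) • cosMap K (w₁ + w₂) (b₁ + b₂) + (1/2 : ℝ) • cosMap K (w₁ - w₂) (b₁ - b₂) := by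
    intro w₁ w₂ b₁ b₂
    ext x
    simp only [ContinuousMap.mul_apply, ContinuousMap.add_apply, ContinuousMap.smul_apply,
      cosMap_apply, smul_eq_mul, Pi.add_apply, Pi.sub_apply]
    set p := b₁ + ∑ i, w₁ i * (x : Fin n → ℝ) i with hp
    set q := b₂ + ∑ i, w₂ i * (x : Fin n → ℝ) i with hq
    have e1 : b₁ + b₂ + ∑ i, (w₁ i + w₂ i) * (x : Fin n → ℝ) i = p + q := by
      rw [hp, hq]; simp only [add_mul, Finset.sum_add_distrib]; ring
    have e2 : b₁ - b₂ + ∑ i, (w₁ i - w₂ i) * (x : Fin n → ℝ) i = p - q := by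
      rw [hp, hq]; simp only [sub_mul, Finset.sum_sub_distrib]; ring
    rw [e1, e2]
    have e3 : Real.cos (p + q) + Real.cos (p - q) = 2 * (Real.cos p * Real.cos q) := by
      rw [Real.cos_add, Real.cos_sub]; ring
    linarith [e3]
  have hmul : ∀ f g : C(↥K, ℝ), f ∈ V → g ∈ V → f * g ∈ V := by
    intro f g hf hg
    induction hf, hg using Submodule.span_induction₂ with
    | mem_mem p q hp hq =>
      obtain ⟨w₁, b₁, rfl⟩ := hp
      obtain ⟨w₂, b₂, rfl⟩ := hq
      rw [hkey]
      exact V.add_mem (V.smul_mem _ (Submodule.subset_span ⟨_, _, rfl⟩))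
        (V.smul_mem _ (Submodule.subset_span ⟨_, _, rfl⟩))
    | zero_left q hq => rw [zero_mul]; exact V.zero_mem
    | zero_right p hp => rw [mul_zero]; exact V.zero_mem
    | add_left p q r hp hq hr h1 h2 => rw [add_mul]; exact V.add_mem h1 h2
    | add_right p q r hp hq hr h1 h2 => rw [mul_add]; exact V.add_mem h1 h2
    | smul_left c p q hp hq h1 => rw [smul_mul_assoc]; exact V.smul_mem _ h1
    | smul_right c p q hp hq h1 => rw [mul_smul_comm]; exact V.smul_mem _ h1
  set A : Subalgebra ℝ C(↥K, ℝ) := V.toSubalgebra hone hmul with hA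
  have hsep : A.SeparatesPoints := by
    intro x y hxy
    have hne : (x : Fin n → ℝ) ≠ (y : Fin n → ℝ) := fun hc => hxy (Subtype.ext hc)
    obtain ⟨i, hi⟩ := Function.ne_iff.mp hne
    have hyx : (y : Fin n → ℝ) i - (x : Fin n → ℝ) i ≠ 0 := sub_ne_zero_of_ne (Ne.symm hi)
    set cc : ℝ := (Real.pi / 2) / ((y : Fin n → ℝ) i - (x : Fin n → ℝ) i) with hcc
    set w : Fin n → ℝ := fun j => if j = i then cc else 0 with hw
    set b : ℝ := -(cc * (x : Fin n → ℝ) i) with hb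
    refine ⟨cosMap K w b, ⟨cosMap K w b, ?_, rfl⟩, ?_⟩
    · exact Submodule.subset_span ⟨w, b, rfl⟩
    · have hsum : ∀ z : ↥K, ∑ j, w j * (z : Fin n → ℝ) j = cc * (z : Fin n → ℝ) i := by
        intro z
        rw [hw]
        simp [ite_mul, zero_mul, Finset.sum_ite_eq, Finset.sum_ite_eq']
      have hx0 : cosMap K w b x = 1 := by
        simp only [cosMap_apply, hsum x, hb]
        norm_num
      have hy0 : cosMap K w b y = 0 := by
        simp only [cosMap_apply, hsum y, hb]
        have : -(cc * (x : Fin n → ℝ) i) + cc * (y : Fin n → ℝ) i = Real.pi / 2 := by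
          rw [hcc]; field_simp; ring
        rw [this, Real.cos_pi_div_two]
      rw [hx0, hy0]; norm_num
  obtain ⟨⟨g, hgA⟩, hgnear⟩ :=
    ContinuousMap.exists_mem_subalgebra_near_continuous_of_separatesPoints A hsep
      (fun x : ↥K => h x) hh.restrict (δ/2) (by linarith)
  have hgV : g ∈ V := hgA
  have happrox : ∀ f ∈ V, ∀ γ : ℝ, 0 < γ →
      ∃ G, Net σ n 2 G ∧ ∀ x : ↥K, |G x - f x| < γ := by
    intro f hf
    induction hf using Submodule.span_induction with
    | mem f hfGen =>
      intro γ hγ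
      obtain ⟨w, b, rfl⟩ := hfGen
      obtain ⟨G, hG, hGa⟩ := ridge_approx hσ hK Real.cos Real.continuous_cos w b γ hγ
      exact ⟨G, hG, fun x => hGa x.1 x.2⟩
    | zero =>
      intro γ hγ
      exact ⟨fun _ => 0, net_const 1 0, fun x => by simpa using hγ⟩
    | add f g hf hg ihf ihg =>
      intro γ hγ
      obtain ⟨Gf, h1, h2⟩ := ihf (γ/2) (by linarith)
      obtain ⟨Gg, h3, h4⟩ := ihg (γ/2) (by linarith)
      refine ⟨fun x => Gf x + Gg x, net_add2 h1 h3, fun x => ?_⟩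
      have e2 := h2 x
      have e4 := h4 x
      have e5 : |Gf ↑x + Gg ↑x - (f + g) x| = |(Gf ↑x - f x) + (Gg ↑x - g x)| := by
        simp only [ContinuousMap.add_apply]; ring_nf
      rw [e5]
      calc |(Gf ↑x - f x) + (Gg ↑x - g x)| ≤ |Gf ↑x - f x| + |Gg ↑x - g x| := abs_add_le _ _
      _ < γ := by linarith
    | smul α f hf ihf =>
      intro γ hγ
      rcases eq_or_ne α 0 with rfl | hα
      · refine ⟨fun _ => 0, net_const 1 0, fun x => ?_⟩
        simpa using hγ
      · obtain ⟨G, h1, h2⟩ := ihf (γ / |α|) (by positivity)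
        refine ⟨fun x => α * G x + 0, net_affine_post h1 α 0, fun x => ?_⟩
        have e2 := h2 x
        have e5 : |α * G ↑x + 0 - (α • f) x| = |α| * |G ↑x - f x| := by
          rw [ContinuousMap.smul_apply, smul_eq_mul, ← abs_mul]
          ring_nf
        rw [e5]
        calc |α| * |G ↑x - f x| < |α| * (γ / |α|) :=
          mul_lt_mul_of_pos_left e2 (abs_pos.mpr hα)
        _ = γ := by field_simp
  obtain ⟨G, hG, hGa⟩ := happrox g hgV (δ/2) (by linarith)
  refine ⟨G, hG, fun x hx => ?_⟩
  have h1 := hgnear ⟨x, hx⟩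
  have h2 := hGa ⟨x, hx⟩
  rw [Real.norm_eq_abs] at h1
  calc |G x - h x| = |(G x - g ⟨x, hx⟩) + (g ⟨x, hx⟩ - h x)| := by ring_nf
  _ ≤ |G x - g ⟨x, hx⟩| + |g ⟨x, hx⟩ - h x| := abs_add_le _ _
  _ < δ := by linarith

end Aux

set_option maxHeartbeats 1000000 in
theorem stmt13 (σ : ℝ → ℝ) (hσ : IsSquashing σ) (hstrict : StrictMono σ)
    (n : ℕ) (K : Set (Fin n → ℝ)) (hK : IsCompact K)
    (T : (Fin n → ℝ) → ℝ) (hT : ContinuousOn T K)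
    (hTrange : ∀ x ∈ K, T x ∈ Set.range σ)
    (ε : ℝ) (hε : 0 < ε) :
    ∃ g : (Fin n → ℝ) → ℝ, Net σ n 4 g ∧ ∀ x ∈ K, |σ (g x) - T x| < ε := by
  rcases K.eq_empty_or_nonempty with rfl | hKne
  · exact ⟨fun _ => 0, net_const 3 0, fun x hx => absurd hx (Set.notMem_empty x)⟩
  have hmono : Monotone σ := hσ.1
  have hcont : Continuous σ := hσ.2.1
  -- compact image and its extrema
  have hTK : IsCompact (T '' K) := hK.image_of_continuousOn hT
  have hTKne : (T '' K).Nonempty := hKne.image T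
  obtain ⟨xα, hxα, hxαe⟩ := hTK.sInf_mem hTKne
  obtain ⟨xβ, hxβ, hxβe⟩ := hTK.sSup_mem hTKne
  obtain ⟨u, hu⟩ := hTrange xα hxα
  obtain ⟨v, hv⟩ := hTrange xβ hxβ
  have hσu : σ u = sInf (T '' K) := by rw [hu, hxαe]
  have hσv : σ v = sSup (T '' K) := by rw [hv, hxβe]
  have hαβ : sInf (T '' K) ≤ sSup (T '' K) := csInf_le_csSup hTKne hTK.bddBelow hTK.bddAbove
  have huv : u ≤ v := by
    rw [← hstrict.le_iff_le, hσu, hσv]; exact hαβ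
  have hσuv : σ u ≤ σ v := hmono huv
  have hbddT : ∀ x ∈ K, T x ∈ Set.Icc (σ u) (σ v) := by
    intro x hx
    rw [hσu, hσv]
    exact ⟨csInf_le hTK.bddBelow ⟨x, hx, rfl⟩, le_csSup hTK.bddAbove ⟨x, hx, rfl⟩⟩
  -- the restricted homeomorphism realizing σ⁻¹
  set σ' : Set.Icc u v → Set.Icc (σ u) (σ v) :=
    fun t => ⟨σ t, hmono t.2.1, hmono t.2.2⟩ with hσ'def
  have hσ'c : Continuous σ' :=
    Continuous.subtype_mk (hcont.comp continuous_subtype_val) _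
  have hbij : Function.Bijective σ' := by
    constructor
    · intro a b hab
      exact Subtype.ext (hstrict.injective (congrArg Subtype.val hab))
    · rintro ⟨y, hy⟩
      obtain ⟨t, ht, hte⟩ := intermediate_value_Icc huv hcont.continuousOn hy
      exact ⟨⟨t, ht⟩, Subtype.ext hte⟩
  set e : Set.Icc u v ≃ₜ Set.Icc (σ u) (σ v) :=
    Continuous.homeoOfEquivCompactToT2 (f := Equiv.ofBijective σ' hbij) hσ'c with hedef
  -- the clamped inverse
  set clamp : ℝ → ℝ := fun s => min (σ v) (max (σ u) s) with hclampdef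
  have hclampc : Continuous clamp := continuous_const.min (continuous_const.max continuous_id)
  have hclampmem : ∀ s, clamp s ∈ Set.Icc (σ u) (σ v) := fun s =>
    ⟨le_min hσuv (le_max_left _ _), min_le_left _ _⟩
  have hclampT : ∀ x ∈ K, clamp (T x) = T x := by
    intro x hx
    obtain ⟨h1, h2⟩ := hbddT x hx
    rw [hclampdef]
    simp only
    rw [max_eq_right h1, min_eq_right h2]
  set H : ℝ → ℝ := fun s => ((e.symm ⟨clamp s, hclampmem s⟩ : Set.Icc u v) : ℝ) with hHdef
  have hHc : Continuous H :=
    continuous_subtype_val.comp (e.symm.continuous.comp (Continuous.subtype_mk hclampc _))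
  set h : (Fin n → ℝ) → ℝ := fun x => H (T x) with hhdef
  have hhcont : ContinuousOn h K := hHc.comp_continuousOn hT
  have hσh : ∀ x ∈ K, σ (h x) = T x := by
    intro x hx
    calc σ (h x) = ((e (e.symm ⟨clamp (T x), hclampmem _⟩) : Set.Icc (σ u) (σ v)) : ℝ) := rfl
    _ = clamp (T x) := by rw [e.apply_symm_apply]
    _ = T x := hclampT x hx
  have hhmem : ∀ x, h x ∈ Set.Icc u v := fun x => (e.symm ⟨clamp (T x), hclampmem _⟩).2
  -- uniform continuity of σ on a compact neighborhood interval
  have hUC := (isCompact_Icc (a := u - 1) (b := v + 1)).uniformContinuousOn_of_continuous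
    hcont.continuousOn
  rw [Metric.uniformContinuousOn_iff] at hUC
  obtain ⟨δ₀, hδ₀, hmod⟩ := hUC ε hε
  set δ' : ℝ := min δ₀ 1 with hδ'def
  have hδ'0 : 0 < δ' := lt_min hδ₀ one_pos
  -- approximate h by a level-4 net
  obtain ⟨G₂, hG₂, hG₂a⟩ := net2_dense hσ hK h hhcont (δ'/6) (by positivity)
  obtain ⟨G₃, hG₃, hG₃a⟩ := net_lift hσ hK hG₂ (δ'/6) (by positivity)
  obtain ⟨G₄, hG₄, hG₄a⟩ := net_lift hσ hK hG₃ (δ'/6) (by positivity)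
  refine ⟨G₄, hG₄, fun x hx => ?_⟩
  have hd : |G₄ x - h x| < δ'/2 := by
    have e2 := hG₂a x hx
    have e3 := hG₃a x hx
    have e4 := hG₄a x hx
    calc |G₄ x - h x| = |(G₄ x - G₃ x) + (G₃ x - G₂ x) + (G₂ x - h x)| := by ring_nf
    _ ≤ |(G₄ x - G₃ x) + (G₃ x - G₂ x)| + |G₂ x - h x| := abs_add_le _ _
    _ ≤ |G₄ x - G₃ x| + |G₃ x - G₂ x| + |G₂ x - h x| := by linarith [abs_add_le (G₄ x - G₃ x) (G₃ x - G₂ x)]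
    _ < δ'/2 := by linarith
  obtain ⟨hu1, hv1⟩ := hhmem x
  have habs := abs_lt.mp hd
  have hδ'1 : δ' ≤ 1 := min_le_right _ _
  have hmem1 : G₄ x ∈ Set.Icc (u - 1) (v + 1) :=
    ⟨by linarith [habs.1], by linarith [habs.2]⟩
  have hmem2 : h x ∈ Set.Icc (u - 1) (v + 1) := ⟨by linarith, by linarith⟩
  have hdist : dist (G₄ x) (h x) < δ₀ := by
    rw [Real.dist_eq]
    have hle : δ' ≤ δ₀ := min_le_left _ _
    linarith [hd, abs_nonneg (G₄ x - h x)]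
  have hfin := hmod _ hmem1 _ hmem2 hdist
  rw [Real.dist_eq] at hfin
  calc |σ (G₄ x) - T x| = |σ (G₄ x) - σ (h x)| := by rw [hσh x hx]
  _ < ε := hfin
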